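/- Let A be a finite-dimensional commutative ℂ-algebra, V an s-dimensional ℂ-vector space with basis e₁, …, e_s, and θ ∈ Z²(A, V) written θ(x, y) = Σᵢ θᵢ(x, y) eᵢ with θᵢ ∈ Z²(A, ℂ). Assume Ann(θ) ∩ Ann(A) = 0. Then the central extension A_θ has a nonzero annihilator component if and only if the classes [θ₁], …, [θ_s] are linearly dependent in H²(A, ℂ). -/
import Mathlib


/-- With `θ = Σ θᵢ eᵢ` a symmetric cocycle satisfying `Ann(θ) ∩ Ann(A) = 0`, the central
extension `A_θ` has a nonzero annihilator component (a nonzero subspace `I` of the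
annihilator of `A_θ` with `A_θ = B₀ ⊕ I` for some subalgebra `B₀`) iff the classes
`[θ₁], …, [θ_s]` are linearly dependent in `H²(A,ℂ)`, i.e. some nontrivial linear
combination of the `θᵢ` is a coboundary. -/
theorem stmt5 (A : Type*) [NonUnitalNonAssocCommRing A] [Module ℂ A]
    [SMulCommClass ℂ A A] [IsScalarTower ℂ A A] [FiniteDimensional ℂ A]
    (s : ℕ) (θ : Fin s → (A →ₗ[ℂ] A →ₗ[ℂ] ℂ))
    (hθsymm : ∀ i x y, θ i x y = θ i y x)
    (hθann : ∀ x : A, (∀ i y, θ i x y = 0) → (∀ y, x * y = 0) → x = 0) :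
    (∃ (B₀ I : Submodule ℂ (A × (Fin s → ℂ))),
       I ≠ ⊥ ∧
       (∀ p ∈ I, ∀ q : A × (Fin s → ℂ),
         ((p.1 * q.1, fun i => θ i p.1 q.1) : A × (Fin s → ℂ)) = 0) ∧
       (∀ p ∈ B₀, ∀ q ∈ B₀,
         ((p.1 * q.1, fun i => θ i p.1 q.1) : A × (Fin s → ℂ)) ∈ B₀) ∧
       IsCompl B₀ I) ↔
    (∃ c : Fin s → ℂ, c ≠ 0 ∧
      ∃ f : A →ₗ[ℂ] ℂ, ∀ x y : A, (∑ i, c i * θ i x y) = f (x * y)) := by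
  constructor
  · rintro ⟨B₀, I, hIne, hIann, hB₀, hcompl⟩
    -- every element of I has vanishing first component
    have hI1 : ∀ p ∈ I, p.1 = 0 := by
      intro p hp
      refine hθann p.1 (fun i y => ?_) (fun y => ?_)
      · exact congrFun (congrArg Prod.snd (hIann p hp (y, 0))) i
      · exact congrArg Prod.fst (hIann p hp (y, 0))
    obtain ⟨p, hpI, hpne⟩ := (Submodule.ne_bot_iff I).mp hIne
    -- p is not in B₀
    have hpB : p ∉ B₀ := by
      intro hpB
      exact hpne (Submodule.disjoint_def.mp hcompl.disjoint p hpB hpI)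
    -- a dual functional vanishing on B₀ and nonzero at p
    obtain ⟨g, hgp, hgB⟩ := Submodule.exists_dual_map_eq_bot_of_notMem hpB inferInstance
    have hgB' : ∀ b ∈ B₀, g b = 0 := by
      intro b hb
      have : g b ∈ B₀.map g := Submodule.mem_map_of_mem hb
      rwa [hgB, Submodule.mem_bot] at this
    -- key identity: g kills all products
    have hkey : ∀ x y : A, g (x * y, fun i => θ i x y) = 0 := by
      intro x y
      have hx : ((x, 0) : A × (Fin s → ℂ)) ∈ B₀ ⊔ I := by
        rw [hcompl.sup_eq_top]; trivial
      have hy : ((y, 0) : A × (Fin s → ℂ)) ∈ B₀ ⊔ I := by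
        rw [hcompl.sup_eq_top]; trivial
      obtain ⟨b, hb, i, hi, hbi⟩ := Submodule.mem_sup.mp hx
      obtain ⟨b', hb', i', hi', hbi'⟩ := Submodule.mem_sup.mp hy
      have hxb : x = b.1 := by
        have h1 := congrArg Prod.fst hbi
        simp only [Prod.fst_add] at h1
        rw [← h1, hI1 i hi, add_zero]
      have hyb : y = b'.1 := by
        have h1 := congrArg Prod.fst hbi'
        simp only [Prod.fst_add] at h1
        rw [← h1, hI1 i' hi', add_zero]
      rw [hxb, hyb]
      exact hgB' _ (hB₀ b hb b' hb')
    -- the coefficients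
    set c : Fin s → ℂ := fun i => g (0, Pi.single i 1) with hc
    have hsingle : ∀ v : Fin s → ℂ,
        ((0 : A), v) = ∑ i, v i • (((0 : A), Pi.single i 1) : A × (Fin s → ℂ)) := by
      intro v
      apply Prod.ext
      · rw [Prod.fst_sum]; simp
      · rw [Prod.snd_sum]
        funext j
        simp [Pi.single_apply, Finset.sum_apply, mul_ite]
    have hgv : ∀ v : Fin s → ℂ, g ((0 : A), v) = ∑ i, v i * c i := by
      intro v
      rw [hsingle v, map_sum]
      exact Finset.sum_congr rfl fun i _ => by rw [map_smul, smul_eq_mul]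
    refine ⟨c, ?_, -(g.comp (LinearMap.inl ℂ A (Fin s → ℂ))), ?_⟩
    · intro hc0
      apply hgp
      have hp1 : p = ((0 : A), p.2) := by
        ext
        · exact hI1 p hpI
        · rfl
      rw [hp1, hgv]
      simp [hc0]
    · intro x y
      have h0 := hkey x y
      have hdecomp : ((x * y, fun i => θ i x y) : A × (Fin s → ℂ))
          = (x * y, 0) + ((0 : A), fun i => θ i x y) := by
        ext <;> simp
      rw [hdecomp, map_add, hgv] at h0
      have : ∑ i, (θ i) x y * c i = -g (x * y, 0) := by linear_combination h0
      simp only [LinearMap.neg_apply, LinearMap.comp_apply, LinearMap.inl_apply]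
      rw [← this]
      exact Finset.sum_congr rfl fun i _ => mul_comm _ _
  · rintro ⟨c, hc, f, hf⟩
    obtain ⟨j, hj0⟩ := Function.ne_iff.mp hc
    have hj : c j ≠ 0 := by simpa using hj0
    -- the linear functional whose kernel is B₀
    let L : (A × (Fin s → ℂ)) →ₗ[ℂ] ℂ :=
      { toFun := fun p => (∑ i, c i * p.2 i) - f p.1
        map_add' := by
          intro p q
          simp [mul_add, Finset.sum_add_distrib]
          ring
        map_smul' := by
          intro a p
          simp only [Prod.smul_snd, Prod.smul_fst, Pi.smul_apply, smul_eq_mul, map_smul,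
            RingHom.id_apply, mul_sub, Finset.mul_sum]
          congr 1
          exact Finset.sum_congr rfl fun i _ => by ring }
    set w : A × (Fin s → ℂ) := ((0 : A), Pi.single j (c j)⁻¹) with hw
    have hLw : L w = 1 := by
      simp only [L, LinearMap.coe_mk, AddHom.coe_mk, hw]
      rw [map_zero, sub_zero]
      rw [Finset.sum_eq_single j]
      · rw [Pi.single_eq_same, mul_inv_cancel₀ hj]
      · intro i _ hij
        rw [Pi.single_eq_of_ne hij, mul_zero]
      · intro h; exact absurd (Finset.mem_univ j) h
    have hwne : w ≠ 0 := by
      intro h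
      have := congrFun (congrArg Prod.snd h) j
      rw [hw] at this
      simp [Pi.single_eq_same] at this
      exact hj this
    refine ⟨LinearMap.ker L, Submodule.span ℂ {w}, ?_, ?_, ?_, ?_⟩
    · simpa [Submodule.span_singleton_eq_bot] using hwne
    · intro p hp q
      have hp1 : p.1 = 0 := by
        obtain ⟨a, ha⟩ := Submodule.mem_span_singleton.mp hp
        rw [← ha, hw]
        simp
      ext
      · simp [hp1]
      · simp [hp1]
    · intro p _ q _
      rw [LinearMap.mem_ker]
      simp only [L, LinearMap.coe_mk, AddHom.coe_mk]
      rw [hf p.1 q.1, sub_self]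
    · constructor
      · rw [Submodule.disjoint_def]
        intro x hxK hxS
        obtain ⟨a, ha⟩ := Submodule.mem_span_singleton.mp hxS
        have : L x = a := by rw [← ha, map_smul, hLw, smul_eq_mul, mul_one]
        rw [LinearMap.mem_ker] at hxK
        rw [← ha, ← this, hxK, zero_smul]
      · rw [codisjoint_iff, Submodule.eq_top_iff']
        intro x
        have : x = (x - L x • w) + L x • w := by abel
        rw [this]
        refine Submodule.add_mem_sup ?_ (Submodule.smul_mem _ _ (Submodule.mem_span_singleton_self w))
        rw [LinearMap.mem_ker, map_sub, map_smul, hLw, smul_eq_mul, mul_one, sub_self]
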